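/- Let n ≥ 1 and let (r_{ik}^{jl})_{i,j,k,l ∈ {1,…,n}} be a family of real numbers that is antisymmetric in the sense that r_{ik}^{jl} = −r_{ki}^{lj} for all i,j,k,l. Then the element T(r) := Σ_{i,j,k,l,i',j',k',l'=1}^{n} r_{ik}^{jl} · r_{i'k'}^{j'l'} · [E_{ij}, E_{i'j'}] ∧ E_{kl} ∧ E_{k'l'} of the third exterior power Λ³(gl(n,ℝ)) vanishes if and only if for all i,j,k,l,m,p ∈ {1,…,n} with (i,j) < (k,l) < (m,p) in lexicographic order one has Σ_{d=1}^{n} ( r_{ik}^{dl} r_{dm}^{jp} − r_{mk}^{dl} r_{di}^{pj} + r_{km}^{dp} r_{di}^{lj} − r_{im}^{dp} r_{dk}^{jl} + r_{mi}^{dj} r_{dk}^{pl} − r_{ki}^{dj} r_{dm}^{lp} ) = 0. -/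

import Mathlib

open ExteriorAlgebra

namespace YBE

variable {n : ℕ}

/-- pull an `ite` with summand-independent condition out of a sum -/
theorem sum_ite_pull {α M : Type*} [AddCommMonoid M] (s : Finset α) (c : Prop) [Decidable c]
    (f : α → M) : (∑ x ∈ s, if c then f x else 0) = if c then ∑ x ∈ s, f x else 0 := by
  split <;> simp

noncomputable def ιE (i j : Fin n) : ExteriorAlgebra ℝ (Matrix (Fin n) (Fin n) ℝ) :=
  ι ℝ (Matrix.single i j 1)

noncomputable def ω (A B C : Fin n × Fin n) : ExteriorAlgebra ℝ (Matrix (Fin n) (Fin n) ℝ) :=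
  ιE A.1 A.2 * ιE B.1 B.2 * ιE C.1 C.2

def cc (r : Fin n → Fin n → Fin n → Fin n → ℝ) (A B C : Fin n × Fin n) : ℝ :=
  ∑ d, (r A.1 d B.1 B.2 * r d A.2 C.1 C.2 - r d A.2 B.1 B.2 * r A.1 d C.1 C.2)

def DD (r : Fin n → Fin n → Fin n → Fin n → ℝ) (A B C : Fin n × Fin n) : ℝ :=
  cc r A B C - cc r B A C + cc r B C A - cc r C B A + cc r C A B - cc r A C B

theorem E_mul (i j k l : Fin n) :
    Matrix.single i j (1:ℝ) * Matrix.single k l 1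
      = if j = k then Matrix.single i l 1 else 0 := by
  by_cases h : j = k
  · subst h; rw [Matrix.single_mul_single_same, one_mul, if_pos rfl]
  · rw [Matrix.single_mul_single_of_ne (h := h), if_neg h]

theorem ι_anticomm (x y : Matrix (Fin n) (Fin n) ℝ) :
    ι ℝ x * ι ℝ y = -(ι ℝ y * ι ℝ x) :=
  eq_neg_of_add_eq_zero_left (ι_add_mul_swap x y)

theorem ω_swap12 (A B C : Fin n × Fin n) : ω B A C = -ω A B C := by
  unfold ω ιE; rw [ι_anticomm, neg_mul]

theorem ω_swap23 (A B C : Fin n × Fin n) : ω A C B = -ω A B C := by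
  unfold ω ιE; rw [mul_assoc, mul_assoc, ι_anticomm, mul_neg]

end YBE

namespace YBE

theorem reorder1 {α M : Type*} [Fintype α] [AddCommMonoid M]
    (f : α → α → α → α → α → α → α → M) :
    (∑ a, ∑ d, ∑ k, ∑ l, ∑ b, ∑ k', ∑ l', f a d k l b k' l')
    = ∑ a, ∑ b, ∑ k, ∑ l, ∑ k', ∑ l', ∑ d, f a d k l b k' l' := by
  conv_lhs => enter [2, x1]; rw [Finset.sum_comm]
  conv_lhs => enter [2, x1, 2, x2]; rw [Finset.sum_comm]
  conv_lhs => enter [2, x1, 2, x2, 2, x3]; rw [Finset.sum_comm]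
  conv_lhs => enter [2, x1, 2, x2, 2, x3, 2, x4]; rw [Finset.sum_comm]
  conv_lhs => enter [2, x1, 2, x2, 2, x3, 2, x4, 2, x5]; rw [Finset.sum_comm]
  conv_lhs => enter [2, x1, 2, x2]; rw [Finset.sum_comm]
  conv_lhs => enter [2, x1]; rw [Finset.sum_comm]

theorem reorder2 {α M : Type*} [Fintype α] [AddCommMonoid M]
    (f : α → α → α → α → α → α → α → M) :
    (∑ d, ∑ b, ∑ k, ∑ l, ∑ a, ∑ k', ∑ l', f d b k l a k' l')
    = ∑ a, ∑ b, ∑ k, ∑ l, ∑ k', ∑ l', ∑ d, f d b k l a k' l' := by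
  conv_lhs => enter [2, x1, 2, x2, 2, x3]; rw [Finset.sum_comm]
  conv_lhs => enter [2, x1, 2, x2]; rw [Finset.sum_comm]
  conv_lhs => enter [2, x1]; rw [Finset.sum_comm]
  rw [Finset.sum_comm]
  conv_lhs => enter [2, x1]; rw [Finset.sum_comm]
  conv_lhs => enter [2, x1, 2, x2]; rw [Finset.sum_comm]
  conv_lhs => enter [2, x1, 2, x2, 2, x3]; rw [Finset.sum_comm]
  conv_lhs => enter [2, x1, 2, x2, 2, x3, 2, x4]; rw [Finset.sum_comm]
  conv_lhs => enter [2, x1, 2, x2, 2, x3, 2, x4, 2, x5]; rw [Finset.sum_comm]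

end YBE

namespace YBE
set_option maxHeartbeats 1000000 in
theorem expand (n : ℕ) (r : Fin n → Fin n → Fin n → Fin n → ℝ) :
    (∑ i : Fin n, ∑ j : Fin n, ∑ k : Fin n, ∑ l : Fin n,
     ∑ i' : Fin n, ∑ j' : Fin n, ∑ k' : Fin n, ∑ l' : Fin n,
      (r i j k l * r i' j' k' l') •
        (ExteriorAlgebra.ι ℝ
            (Matrix.single i j (1:ℝ) * Matrix.single i' j' (1:ℝ)
              - Matrix.single i' j' (1:ℝ) * Matrix.single i j (1:ℝ)) *
         ExteriorAlgebra.ι ℝ (Matrix.single k l (1:ℝ)) *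
         ExteriorAlgebra.ι ℝ (Matrix.single k' l' (1:ℝ)))) =
    ∑ A : Fin n × Fin n, ∑ B : Fin n × Fin n, ∑ C : Fin n × Fin n, cc r A B C • ω A B C := by
  simp only [E_mul, map_sub, map_zero,
    apply_ite (fun x : Matrix (Fin n) (Fin n) ℝ => ExteriorAlgebra.ι ℝ x),
    sub_mul, ite_mul, zero_mul, smul_sub, smul_ite, smul_zero,
    Finset.sum_sub_distrib, sum_ite_pull, Finset.sum_ite_eq, Finset.sum_ite_eq',
    Finset.mem_univ, if_true]
  simp only [Fintype.sum_prod_type, cc, ω, ιE, Finset.sum_smul, sub_smul,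
    Finset.sum_sub_distrib]
  rw [reorder1 (fun a d k l b k' l' => (r a d k l * r d b k' l') •
        (ExteriorAlgebra.ι ℝ (Matrix.single a b 1) *
         ExteriorAlgebra.ι ℝ (Matrix.single k l 1) *
         ExteriorAlgebra.ι ℝ (Matrix.single k' l' 1))),
      reorder2 (fun d b k l a k' l' => (r d b k l * r a d k' l') •
        (ExteriorAlgebra.ι ℝ (Matrix.single a b 1) *
         ExteriorAlgebra.ι ℝ (Matrix.single k l 1) *
         ExteriorAlgebra.ι ℝ (Matrix.single k' l' 1)))]
end YBE

namespace YBE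
variable {n : ℕ}

theorem perm12 {α M : Type*} [Fintype α] [AddCommMonoid M] (F : α → α → α → M) :
    (∑ A, ∑ B, ∑ C, F B A C) = ∑ A, ∑ B, ∑ C, F A B C := by
  rw [Finset.sum_comm]

theorem perm23 {α M : Type*} [Fintype α] [AddCommMonoid M] (F : α → α → α → M) :
    (∑ A, ∑ B, ∑ C, F A C B) = ∑ A, ∑ B, ∑ C, F A B C := by
  conv_lhs => enter [2, x1]; rw [Finset.sum_comm]

theorem perm13 {α M : Type*} [Fintype α] [AddCommMonoid M] (F : α → α → α → M) :
    (∑ A, ∑ B, ∑ C, F C B A) = ∑ A, ∑ B, ∑ C, F A B C := by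
  rw [Finset.sum_comm]
  conv_lhs => enter [2, x1]; rw [Finset.sum_comm]
  rw [Finset.sum_comm]

theorem permCyc1 {α M : Type*} [Fintype α] [AddCommMonoid M] (F : α → α → α → M) :
    (∑ A, ∑ B, ∑ C, F B C A) = ∑ A, ∑ B, ∑ C, F A B C := by
  rw [Finset.sum_comm]
  conv_lhs => enter [2, x1]; rw [Finset.sum_comm]

theorem permCyc2 {α M : Type*} [Fintype α] [AddCommMonoid M] (F : α → α → α → M) :
    (∑ A, ∑ B, ∑ C, F C A B) = ∑ A, ∑ B, ∑ C, F A B C := by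
  conv_lhs => enter [2, x1]; rw [Finset.sum_comm]
  rw [Finset.sum_comm]

theorem ω_swap13 (A B C : Fin n × Fin n) : ω C B A = -ω A B C := by
  rw [ω_swap12 B C A, ω_swap23 B A C, ω_swap12 A B C]; simp

theorem ω_cyc1 (A B C : Fin n × Fin n) : ω B C A = ω A B C := by
  rw [ω_swap12 C B A]; rw [show ω C B A = -ω A B C from ω_swap13 A B C]; simp

theorem ω_cyc2 (A B C : Fin n × Fin n) : ω C A B = ω A B C := by
  rw [ω_swap12 A C B, ω_swap23 A B C]; simp

set_option maxHeartbeats 800000 in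
theorem six (r : Fin n → Fin n → Fin n → Fin n → ℝ) :
    (∑ A : Fin n × Fin n, ∑ B : Fin n × Fin n, ∑ C : Fin n × Fin n, DD r A B C • ω A B C)
    = (6:ℝ) • ∑ A : Fin n × Fin n, ∑ B : Fin n × Fin n, ∑ C : Fin n × Fin n,
        cc r A B C • ω A B C := by
  have h1 : (∑ A : Fin n × Fin n, ∑ B, ∑ C, cc r B A C • ω A B C)
      = -∑ A : Fin n × Fin n, ∑ B, ∑ C, cc r A B C • ω A B C := by
    rw [perm12 (fun A B C => cc r A B C • ω B A C)]
    have hp : ∀ A B C : Fin n × Fin n, cc r A B C • ω B A C = -(cc r A B C • ω A B C) := by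
      intro A B C; rw [ω_swap12, smul_neg]
    simp only [hp, Finset.sum_neg_distrib]
  have h2 : (∑ A : Fin n × Fin n, ∑ B, ∑ C, cc r A C B • ω A B C)
      = -∑ A : Fin n × Fin n, ∑ B, ∑ C, cc r A B C • ω A B C := by
    rw [perm23 (fun A B C => cc r A B C • ω A C B)]
    have hp : ∀ A B C : Fin n × Fin n, cc r A B C • ω A C B = -(cc r A B C • ω A B C) := by
      intro A B C; rw [ω_swap23, smul_neg]
    simp only [hp, Finset.sum_neg_distrib]
  have h3 : (∑ A : Fin n × Fin n, ∑ B, ∑ C, cc r C B A • ω A B C)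
      = -∑ A : Fin n × Fin n, ∑ B, ∑ C, cc r A B C • ω A B C := by
    rw [perm13 (fun A B C => cc r A B C • ω C B A)]
    have hp : ∀ A B C : Fin n × Fin n, cc r A B C • ω C B A = -(cc r A B C • ω A B C) := by
      intro A B C; rw [ω_swap13, smul_neg]
    simp only [hp, Finset.sum_neg_distrib]
  have h4 : (∑ A : Fin n × Fin n, ∑ B, ∑ C, cc r B C A • ω A B C)
      = ∑ A : Fin n × Fin n, ∑ B, ∑ C, cc r A B C • ω A B C := by
    rw [permCyc1 (fun A B C => cc r A B C • ω C A B)]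
    simp [ω_cyc2]
  have h5 : (∑ A : Fin n × Fin n, ∑ B, ∑ C, cc r C A B • ω A B C)
      = ∑ A : Fin n × Fin n, ∑ B, ∑ C, cc r A B C • ω A B C := by
    rw [permCyc2 (fun A B C => cc r A B C • ω B C A)]
    simp [ω_cyc1]
  simp only [DD, sub_smul, add_smul, Finset.sum_add_distrib, Finset.sum_sub_distrib,
    h1, h2, h3, h4, h5]
  module

end YBE

namespace YBE
variable {n : ℕ} (r : Fin n → Fin n → Fin n → Fin n → ℝ)

theorem DD_swap12 (A B C : Fin n × Fin n) : DD r B A C = -DD r A B C := by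
  unfold DD; ring
theorem DD_swap23 (A B C : Fin n × Fin n) : DD r A C B = -DD r A B C := by
  unfold DD; ring
theorem DD_cyc (A B C : Fin n × Fin n) : DD r C A B = DD r A B C := by
  unfold DD; ring
theorem DD_eq12 (A C : Fin n × Fin n) : DD r A A C = 0 := by unfold DD; ring
theorem DD_eq23 (A B : Fin n × Fin n) : DD r A B B = 0 := by unfold DD; ring
theorem DD_eq13 (A B : Fin n × Fin n) : DD r A B A = 0 := by unfold DD; ring

/-- lexicographic strict order on pairs, as in the statement -/
def lexlt (A B : Fin n × Fin n) : Prop := A.1 < B.1 ∨ (A.1 = B.1 ∧ A.2 < B.2)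

theorem lex_total (A B : Fin n × Fin n) : A = B ∨ lexlt A B ∨ lexlt B A := by
  rcases lt_trichotomy A.1 B.1 with h | h | h
  · exact Or.inr (Or.inl (Or.inl h))
  · rcases lt_trichotomy A.2 B.2 with h2 | h2 | h2
    · exact Or.inr (Or.inl (Or.inr ⟨h, h2⟩))
    · exact Or.inl (Prod.ext h h2)
    · exact Or.inr (Or.inr (Or.inr ⟨h.symm, h2⟩))
  · exact Or.inr (Or.inr (Or.inl h))

theorem DD_eq_2Y (i j k l m p : Fin n) :
    DD r (i,j) (k,l) (m,p) = 2 * ∑ d : Fin n,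
      (r i d k l * r d j m p - r m d k l * r d p i j
       + r k d m p * r d l i j - r i d m p * r d j k l
       + r m d i j * r d p k l - r k d i j * r d l m p) := by
  unfold DD cc
  simp only [Finset.mul_sum]
  rw [← Finset.sum_sub_distrib, ← Finset.sum_add_distrib, ← Finset.sum_sub_distrib,
    ← Finset.sum_add_distrib, ← Finset.sum_sub_distrib]
  exact Finset.sum_congr rfl fun d _ => by ring

end YBE

namespace YBE
variable {n : ℕ}

def φ (a b : Fin n) : Matrix (Fin n) (Fin n) ℝ →ₗ[ℝ] ℝ where
  toFun M := M a b
  map_add' _ _ := rfl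
  map_smul' _ _ := rfl

noncomputable def gg (A B C : Fin n × Fin n) :
    (Matrix (Fin n) (Fin n) ℝ) [⋀^Fin 3]→ₗ[ℝ] ℝ :=
  (Matrix.detRowAlternating).compLinearMap
    (LinearMap.pi ![φ A.1 A.2, φ B.1 B.2, φ C.1 C.2])

noncomputable def FF (A B C : Fin n × Fin n) :
    ExteriorAlgebra ℝ (Matrix (Fin n) (Fin n) ℝ) →ₗ[ℝ] ℝ :=
  liftAlternating (fun i => match i with | 3 => gg A B C | _ => 0)

theorem FF_ιιι (A B C : Fin n × Fin n) (x y z : Matrix (Fin n) (Fin n) ℝ) :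
    FF A B C (ι ℝ x * ι ℝ y * ι ℝ z) = gg A B C ![x, y, z] := by
  rw [FF, mul_assoc, liftAlternating_ι_mul, liftAlternating_ι_mul, liftAlternating_ι]
  rfl
end YBE

namespace YBE
def del (A X : Fin n × Fin n) : ℝ := if X = A then 1 else 0

theorem gg_basis (A B C X Y Z : Fin n × Fin n) :
    gg A B C ![Matrix.single X.1 X.2 1, Matrix.single Y.1 Y.2 1,
      Matrix.single Z.1 Z.2 1]
    = del A X * del B Y * del C Z - del A X * del C Y * del B Z
      - del B X * del A Y * del C Z + del B X * del C Y * del A Z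
      + del C X * del A Y * del B Z - del C X * del B Y * del A Z := by
  have h0 : gg A B C ![Matrix.single X.1 X.2 1, Matrix.single Y.1 Y.2 1,
      Matrix.single Z.1 Z.2 1]
      = Matrix.det (Matrix.of fun i j => (![φ A.1 A.2, φ B.1 B.2, φ C.1 C.2] j)
        (![Matrix.single X.1 X.2 1, Matrix.single Y.1 Y.2 1,
          Matrix.single Z.1 Z.2 1] i)) := rfl
  rw [h0, Matrix.det_fin_three]
  simp only [Matrix.of_apply, Matrix.cons_val', Matrix.cons_val_zero, Matrix.cons_val_one,
    Matrix.head_cons, Matrix.cons_val_two, Matrix.tail_cons, Matrix.empty_val',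
    Matrix.cons_val_fin_one, Matrix.head_fin_const]
  simp only [show ∀ (a b : Fin n) (M : Matrix (Fin n) (Fin n) ℝ), φ a b M = M a b from fun _ _ _ => rfl,
    del, Matrix.single, Matrix.of_apply]
  simp only [← Prod.ext_iff]
end YBE

namespace YBE
set_option maxHeartbeats 1000000 in
theorem FF_S {n : ℕ} (r : Fin n → Fin n → Fin n → Fin n → ℝ) (A B C : Fin n × Fin n) :
    FF A B C (∑ X : Fin n × Fin n, ∑ Y : Fin n × Fin n, ∑ Z : Fin n × Fin n,
      cc r X Y Z • ω X Y Z) = DD r A B C := by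
  have hω : ∀ X Y Z : Fin n × Fin n, FF A B C (ω X Y Z)
      = del A X * del B Y * del C Z - del A X * del C Y * del B Z
      - del B X * del A Y * del C Z + del B X * del C Y * del A Z
      + del C X * del A Y * del B Z - del C X * del B Y * del A Z := by
    intro X Y Z
    rw [ω, ιE, ιE, ιE, FF_ιιι, gg_basis]
  simp only [map_sum, map_smul, hω, smul_eq_mul, del]
  simp only [mul_ite, ite_mul, one_mul, mul_one, mul_zero, zero_mul, mul_sub, mul_add,
    Finset.sum_sub_distrib, Finset.sum_add_distrib, sum_ite_pull,
    Finset.sum_ite_eq, Finset.sum_ite_eq', Finset.mem_univ, if_true]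
  rw [DD]
  ring
end YBE

namespace YBE
theorem DD_swap13 {n : ℕ} (r : Fin n → Fin n → Fin n → Fin n → ℝ) (A B C : Fin n × Fin n) :
    DD r C B A = -DD r A B C := by unfold DD; ring
end YBE

/-- For an antisymmetric family `r` of coefficients encoding
`r = Σ r_{ik}^{jl} E_{ij} ∧ E_{kl} ∈ Λ²(gl(n,ℝ))`, the element
`T(r) = Σ r_{ik}^{jl} r_{i'k'}^{j'l'} [E_{ij},E_{i'j'}] ∧ E_{kl} ∧ E_{k'l'} ∈ Λ³(gl(n,ℝ))`
vanishes iff the component Yang–Baxter equations hold.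
Here `r i j k l` denotes `r_{i k}^{j l}`. -/
theorem stmt_0 (n : ℕ) (hn : 1 ≤ n)
    (r : Fin n → Fin n → Fin n → Fin n → ℝ)
    (hanti : ∀ i j k l, r i j k l = - r k l i j) :
    (∑ i : Fin n, ∑ j : Fin n, ∑ k : Fin n, ∑ l : Fin n,
     ∑ i' : Fin n, ∑ j' : Fin n, ∑ k' : Fin n, ∑ l' : Fin n,
      (r i j k l * r i' j' k' l') •
        (ExteriorAlgebra.ι ℝ
            (Matrix.single i j (1:ℝ) * Matrix.single i' j' (1:ℝ)
              - Matrix.single i' j' (1:ℝ) * Matrix.single i j (1:ℝ)) *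
         ExteriorAlgebra.ι ℝ (Matrix.single k l (1:ℝ)) *
         ExteriorAlgebra.ι ℝ (Matrix.single k' l' (1:ℝ)))) = 0
    ↔ ∀ i j k l m p : Fin n,
        (i < k ∨ (i = k ∧ j < l)) → (k < m ∨ (k = m ∧ l < p)) →
        ∑ d : Fin n,
          (r i d k l * r d j m p - r m d k l * r d p i j
           + r k d m p * r d l i j - r i d m p * r d j k l
           + r m d i j * r d p k l - r k d i j * r d l m p) = 0 := by
  rw [YBE.expand n r]
  constructor
  · intro h0 i j k l m p hik hkm
    have hD : YBE.DD r (i,j) (k,l) (m,p) = 0 := by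
      rw [← YBE.FF_S r (i,j) (k,l) (m,p), h0, map_zero]
    rw [YBE.DD_eq_2Y] at hD
    linarith
  · intro hY
    have hY' : ∀ X Y Z : Fin n × Fin n, YBE.lexlt X Y → YBE.lexlt Y Z →
        YBE.DD r X Y Z = 0 := by
      rintro ⟨x1, x2⟩ ⟨y1, y2⟩ ⟨z1, z2⟩ h1 h2
      rw [YBE.DD_eq_2Y, hY x1 x2 y1 y2 z1 z2 h1 h2, mul_zero]
    have hDD : ∀ A B C : Fin n × Fin n, YBE.DD r A B C = 0 := by
      intro A B C
      rcases YBE.lex_total A B with hAB | hAB | hAB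
      · rw [hAB, YBE.DD_eq12]
      · rcases YBE.lex_total B C with hBC | hBC | hBC
        · rw [hBC, YBE.DD_eq23]
        · exact hY' A B C hAB hBC
        · rcases YBE.lex_total A C with hAC | hAC | hAC
          · rw [← hAC, YBE.DD_eq13]
          · have h := hY' A C B hAC hBC
            rw [YBE.DD_swap23] at h; linarith
          · have h := hY' C A B hAC hAB
            rw [YBE.DD_cyc] at h; exact h
      · rcases YBE.lex_total A C with hAC | hAC | hAC
        · rw [← hAC, YBE.DD_eq13]
        · have h := hY' B A C hAB hAC
          rw [YBE.DD_swap12] at h; linarith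
        · rcases YBE.lex_total B C with hBC | hBC | hBC
          · rw [hBC, YBE.DD_eq23]
          · have h := hY' B C A hBC hAC
            rw [YBE.DD_cyc r C A B, YBE.DD_cyc r A B C] at h; exact h
          · have h := hY' C B A hBC hAB
            rw [YBE.DD_swap13] at h; linarith
    have h6 : (∑ A : Fin n × Fin n, ∑ B : Fin n × Fin n, ∑ C : Fin n × Fin n,
        YBE.DD r A B C • YBE.ω A B C) = 0 := by
      simp [hDD]
    rw [YBE.six r] at h6
    rcases smul_eq_zero.mp h6 with h | h
    · norm_num at h
    · exact h
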